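/- Let G be a graph such that for every vertex v, G \ v is well-covered and α(G \ v) = α(G). Then G is a W₂ graph, i.e., every pair of disjoint independent sets of G is contained in a pair of disjoint independent sets each of size α(G). -/

import Mathlib

open Finset SimpleGraph
open scoped Classical

noncomputable section

/-- A finset of vertices is independent in `G`. -/
def IsIndep {V : Type*} (G : SimpleGraph V) (s : Finset V) : Prop :=
  ∀ u ∈ s, ∀ v ∈ s, ¬ G.Adj u v

/-- The independence number of a finite graph. -/
def indepNumF {V : Type*} [Fintype V] (G : SimpleGraph V) : ℕ :=
  (Finset.univ.filter fun s : Finset V => IsIndep G s).sup Finset.card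

/-- The independence polynomial of a finite graph, evaluated at `x`. -/
def indepPoly {V : Type*} [Fintype V] (G : SimpleGraph V) (x : ℚ) : ℚ :=
  ∑ s ∈ Finset.univ.filter (fun s : Finset V => IsIndep G s), x ^ s.card

/-- The cycle graph on `ZMod n`. -/
def cycleG (n : ℕ) : SimpleGraph (ZMod n) :=
  SimpleGraph.fromRel (fun u v => u - v = 1)

/-- The closed neighborhood of a finset of vertices. -/
def closedNbhdF {V : Type*} (G : SimpleGraph V) (F : Finset V) : Set V :=
  ↑F ∪ {v | ∃ u ∈ F, G.Adj u v}

/-- `G` is a W₂ graph. -/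
def IsW2 {V : Type*} [Fintype V] (G : SimpleGraph V) : Prop :=
  2 ≤ Fintype.card V ∧
  ∀ A B : Finset V, IsIndep G A → IsIndep G B → Disjoint A B →
    ∃ A₀ B₀ : Finset V, IsIndep G A₀ ∧ IsIndep G B₀ ∧ A ⊆ A₀ ∧ B ⊆ B₀ ∧
      Disjoint A₀ B₀ ∧ A₀.card = indepNumF G ∧ B₀.card = indepNumF G

/-- A maximal independent set. -/
def IsMaxIndep {V : Type*} (G : SimpleGraph V) (s : Finset V) : Prop :=
  IsIndep G s ∧ ∀ v ∉ s, ¬ IsIndep G (insert v s)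

/-- `G` is well-covered: all maximal independent sets have size `indepNum G`. -/
def WellCovered {V : Type*} [Fintype V] (G : SimpleGraph V) : Prop :=
  ∀ s : Finset V, IsMaxIndep G s → s.card = indepNumF G

lemma indep_card_le {V : Type*} [Fintype V] {G : SimpleGraph V} {s : Finset V}
    (hs : IsIndep G s) : s.card ≤ indepNumF G :=
  Finset.le_sup (by simp [hs])

lemma indep_mono {V : Type*} {G : SimpleGraph V} {s t : Finset V}
    (hst : s ⊆ t) (ht : IsIndep G t) : IsIndep G s :=
  fun u hu v hv => ht u (hst hu) v (hst hv)

lemma extend_lemma {V : Type*} [Fintype V] {G : SimpleGraph V}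
    (h : ∀ v : V, WellCovered (G.induce ({v}ᶜ : Set V)) ∧
      indepNumF (G.induce ({v}ᶜ : Set V)) = indepNumF G)
    {B : Finset V} (hB : IsIndep G B) {v : V} (hv : v ∉ B) :
    ∃ M : Finset V, B ⊆ M ∧ v ∉ M ∧ IsIndep G M ∧ M.card = indepNumF G := by
  classical
  set 𝒮 := Finset.univ.filter (fun T : Finset V => B ⊆ T ∧ v ∉ T ∧ IsIndep G T) with h𝒮
  have hBmem : B ∈ 𝒮 := by simp [h𝒮, hv, hB]
  obtain ⟨M, hM𝒮, hMmax⟩ := 𝒮.exists_max_image Finset.card ⟨B, hBmem⟩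
  rw [h𝒮, Finset.mem_filter] at hM𝒮
  obtain ⟨-, hBM, hvM, hMind⟩ := hM𝒮
  have hMc : ∀ x ∈ M, x ∈ ({v}ᶜ : Set V) := by
    intro x hx
    simp only [Set.mem_compl_iff, Set.mem_singleton_iff]
    rintro rfl; exact hvM hx
  set M' : Finset ({v}ᶜ : Set V) := M.subtype _ with hM'
  have hcard : M'.card = M.card := by
    rw [hM', Finset.card_subtype, Finset.filter_true_of_mem hMc]
  have hmax : IsMaxIndep (G.induce ({v}ᶜ : Set V)) M' := by
    constructor
    · intro u hu w hw hadj
      rw [hM', Finset.mem_subtype] at hu hw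
      exact hMind _ hu _ hw hadj
    · intro u' hu' hind
      have huM : (u' : V) ∉ M := fun hc => hu' (Finset.mem_subtype.2 hc)
      have hins : IsIndep G (insert (u' : V) M) := by
        intro a ha b hb hadj
        have hav : a ∈ ({v}ᶜ : Set V) := by
          rcases Finset.mem_insert.1 ha with rfl | ha
          · exact u'.2
          · exact hMc a ha
        have hbv : b ∈ ({v}ᶜ : Set V) := by
          rcases Finset.mem_insert.1 hb with rfl | hb
          · exact u'.2
          · exact hMc b hb
        refine hind ⟨a, hav⟩ ?_ ⟨b, hbv⟩ ?_ ?_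
        · rcases Finset.mem_insert.1 ha with h1 | h1
          · exact (@Finset.mem_insert _ (fun a b => Classical.propDecidable (a = b)) _ _ _).2
              (Or.inl (Subtype.ext h1))
          · exact (@Finset.mem_insert _ (fun a b => Classical.propDecidable (a = b)) _ _ _).2
              (Or.inr (Finset.mem_subtype.2 h1))
        · rcases Finset.mem_insert.1 hb with h2 | h2
          · exact (@Finset.mem_insert _ (fun a b => Classical.propDecidable (a = b)) _ _ _).2
              (Or.inl (Subtype.ext h2))
          · exact (@Finset.mem_insert _ (fun a b => Classical.propDecidable (a = b)) _ _ _).2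
              (Or.inr (Finset.mem_subtype.2 h2))
        · exact SimpleGraph.comap_adj.2 hadj
      have hvins : v ∉ insert (u' : V) M := by
        intro hc
        rcases Finset.mem_insert.1 hc with heq | hc
        · have := u'.2
          simp [← heq] at this
        · exact hvM hc
      have hmem : insert (u' : V) M ∈ 𝒮 := by
        simp only [h𝒮, Finset.mem_filter, Finset.mem_univ, true_and]
        exact ⟨hBM.trans (Finset.subset_insert _ _), hvins, hins⟩
      have := hMmax _ hmem
      rw [Finset.card_insert_of_notMem huM] at this
      omega
  have := (h v).1 M' hmax
  rw [hcard, (h v).2] at this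
  exact ⟨M, hBM, hvM, hMind, this⟩

lemma grow {V : Type*} [Fintype V] {G : SimpleGraph V}
    (h : ∀ v : V, WellCovered (G.induce ({v}ᶜ : Set V)) ∧
      indepNumF (G.induce ({v}ᶜ : Set V)) = indepNumF G)
    {A B : Finset V} (hA : IsIndep G A) (hB : IsIndep G B) (hd : Disjoint A B)
    (hcard : B.card < indepNumF G) :
    ∃ x, x ∉ A ∧ x ∉ B ∧ IsIndep G (insert x B) := by
  by_contra hcon
  push_neg at hcon
  have hC : ∀ x ∉ B, IsIndep G (insert x B) → x ∈ A := by
    intro x hx hind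
    by_contra hxA
    exact hcon x hxA hx hind
  have hstep : ∀ a : V, a ∉ B →
      ∃ s, s ∈ A ∧ s ≠ a ∧ (∀ b ∈ B, ¬ G.Adj s b) ∧ s ∉ B := by
    intro a haB
    obtain ⟨M, hBM, haM, hMind, hMcard⟩ := extend_lemma h hB haB
    have hex : ∃ x ∈ M, x ∉ B := by
      by_contra hc
      push_neg at hc
      have := Finset.card_le_card (fun x hx => hc x hx)
      omega
    obtain ⟨x, hxM, hxB⟩ := hex
    have hins : IsIndep G (insert x B) :=
      indep_mono (Finset.insert_subset hxM hBM) hMind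
    refine ⟨x, hC x hxB hins, ?_, ?_, hxB⟩
    · rintro rfl; exact haM hxM
    · intro b hb hadj
      exact hins x (Finset.mem_insert_self _ _) b (Finset.mem_insert_of_mem hb) hadj
  have hv0 : ∃ v0, v0 ∉ B := by
    by_contra hc
    push_neg at hc
    have h1 : (Finset.univ : Finset V) ⊆ B := fun x _ => hc x
    have h2 := Finset.card_le_card h1
    have h3 : indepNumF G ≤ Fintype.card V :=
      Finset.sup_le (fun s _ => s.card_le_univ)
    rw [Finset.card_univ] at h2
    omega
  obtain ⟨v0, hv0⟩ := hv0
  obtain ⟨a, haA, -, haNb, haB⟩ := hstep v0 hv0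
  obtain ⟨M, hBM, haM, hMind, hMcard⟩ := extend_lemma h hB haB
  have key : ∀ u ∈ M, ¬ G.Adj a u := by
    intro u huM hadj
    by_cases huB : u ∈ B
    · exact haNb u huB hadj
    · have hins : IsIndep G (insert u B) :=
        indep_mono (Finset.insert_subset huM hBM) hMind
      exact hA a haA u (hC u huB hins) hadj
  have hbig : IsIndep G (insert a M) := by
    intro u hu w hw hadj
    rcases Finset.mem_insert.1 hu with h1 | h1
    · rcases Finset.mem_insert.1 hw with h2 | h2
      · rw [h1, h2] at hadj; exact G.irrefl hadj
      · rw [h1] at hadj; exact key w h2 hadj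
    · rcases Finset.mem_insert.1 hw with h2 | h2
      · rw [h2] at hadj; exact key u h1 hadj.symm
      · exact hMind u h1 w h2 hadj
  have hle := indep_card_le hbig
  rw [Finset.card_insert_of_notMem haM, hMcard] at hle
  omega

lemma main_aux {V : Type*} [Fintype V] (G : SimpleGraph V)
    (h : ∀ v : V, WellCovered (G.induce ({v}ᶜ : Set V)) ∧
      indepNumF (G.induce ({v}ᶜ : Set V)) = indepNumF G) :
    ∀ n : ℕ, ∀ A B : Finset V, IsIndep G A → IsIndep G B → Disjoint A B →
      2 * indepNumF G ≤ A.card + B.card + n →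
      ∃ A₀ B₀ : Finset V, IsIndep G A₀ ∧ IsIndep G B₀ ∧ A ⊆ A₀ ∧ B ⊆ B₀ ∧
        Disjoint A₀ B₀ ∧ A₀.card = indepNumF G ∧ B₀.card = indepNumF G := by
  intro n
  induction n with
  | zero =>
    intro A B hA hB hd hle
    have h1 := indep_card_le hA
    have h2 := indep_card_le hB
    exact ⟨A, B, hA, hB, Finset.Subset.refl _, Finset.Subset.refl _, hd,
      by omega, by omega⟩
  | succ n ih =>
    intro A B hA hB hd hle
    by_cases hBc : B.card < indepNumF G
    · obtain ⟨x, hxA, hxB, hins⟩ := grow h hA hB hd hBc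
      have hd' : Disjoint A (insert x B) :=
        Finset.disjoint_insert_right.2 ⟨hxA, hd⟩
      obtain ⟨A₀, B₀, p1, p2, p3, p4, p5, p6, p7⟩ :=
        ih A (insert x B) hA hins hd'
          (by rw [Finset.card_insert_of_notMem hxB]; omega)
      exact ⟨A₀, B₀, p1, p2, p3, (Finset.subset_insert _ _).trans p4, p5, p6, p7⟩
    · by_cases hAc : A.card < indepNumF G
      · obtain ⟨x, hxB, hxA, hins⟩ := grow h hB hA hd.symm hAc
        have hd' : Disjoint (insert x A) B :=
          (Finset.disjoint_insert_right.2 ⟨hxB, hd.symm⟩).symm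
        obtain ⟨A₀, B₀, p1, p2, p3, p4, p5, p6, p7⟩ :=
          ih (insert x A) B hins hB hd'
            (by rw [Finset.card_insert_of_notMem hxA]; omega)
        exact ⟨A₀, B₀, p1, p2, (Finset.subset_insert _ _).trans p3, p4, p5, p6, p7⟩
      · have h1 := indep_card_le hA
        have h2 := indep_card_le hB
        exact ⟨A, B, hA, hB, Finset.Subset.refl _, Finset.Subset.refl _, hd,
          by omega, by omega⟩

/-- Staples criterion: if for every vertex `v` the graph `G \ v` is
well-covered with `α(G \ v) = α(G)`, then `G` is W₂: every pair of disjoint independent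
sets of `G` extends to a pair of disjoint independent sets each of size `α(G)`. -/
theorem stmt_11 {V : Type*} [Fintype V] (G : SimpleGraph V)
    (h : ∀ v : V, WellCovered (G.induce ({v}ᶜ : Set V)) ∧
      indepNumF (G.induce ({v}ᶜ : Set V)) = indepNumF G) :
    ∀ A B : Finset V, IsIndep G A → IsIndep G B → Disjoint A B →
      ∃ A₀ B₀ : Finset V, IsIndep G A₀ ∧ IsIndep G B₀ ∧ A ⊆ A₀ ∧ B ⊆ B₀ ∧
        Disjoint A₀ B₀ ∧ A₀.card = indepNumF G ∧ B₀.card = indepNumF G := by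
  intro A B hA hB hd
  exact main_aux G h (2 * indepNumF G) A B hA hB hd (by omega)
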